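/- Let (V_1, …, V_N) be exchangeable real-valued random variables and let t ≥ 0 be a real number. Then P[ #{ i ∈ {1,…,N} : V_i ≤ V_N } ≤ t ] ≤ ⌊t⌋ / N. -/

import Mathlib

open MeasureTheory
open scoped Classical ENNReal

/-- At most `m` indices can have rank (counting ties) at most `m`. -/
lemma rank_card_bound {n m : ℕ} (v : Fin (n+1) → ℝ) :
    (Finset.univ.filter (fun j : Fin (n+1) =>
      (Finset.univ.filter (fun i : Fin (n+1) => v i ≤ v j)).card ≤ m)).card ≤ m := by
  set S := Finset.univ.filter (fun j : Fin (n+1) =>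
      (Finset.univ.filter (fun i : Fin (n+1) => v i ≤ v j)).card ≤ m) with hS
  rcases S.eq_empty_or_nonempty with h | h
  · simp [h]
  · obtain ⟨j, hjS, hmax⟩ := S.exists_max_image v h
    have hsub : S ⊆ Finset.univ.filter (fun i : Fin (n+1) => v i ≤ v j) := by
      intro i hi
      simp only [Finset.mem_filter, Finset.mem_univ, true_and]
      exact hmax i hi
    have hj : (Finset.univ.filter (fun i : Fin (n+1) => v i ≤ v j)).card ≤ m := by
      have := hjS; rw [hS, Finset.mem_filter] at this; exact this.2
    exact le_trans (Finset.card_le_card hsub) hj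

lemma measurable_rankcard {n : ℕ} (j : Fin (n+1)) :
    Measurable (fun v : Fin (n+1) → ℝ =>
      (Finset.univ.filter (fun i : Fin (n+1) => v i ≤ v j)).card) := by
  have h : (fun v : Fin (n+1) → ℝ =>
      (Finset.univ.filter (fun i : Fin (n+1) => v i ≤ v j)).card)
      = fun v => ∑ i : Fin (n+1), if v i ≤ v j then 1 else 0 := by
    funext v; exact Finset.card_filter _ _
  rw [h]
  exact Finset.measurable_sum _ (fun i _ => Measurable.ite
    (measurableSet_le (measurable_pi_apply i) (measurable_pi_apply j))
    measurable_const measurable_const)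

lemma card_filter_comp_perm {α : Type*} [Fintype α] [DecidableEq α]
    (σ : Equiv.Perm α) (p : α → Prop) [DecidablePred p] :
    (Finset.univ.filter (fun i => p (σ i))).card = (Finset.univ.filter p).card := by
  apply Finset.card_bij' (fun i _ => σ i) (fun i _ => σ.symm i) <;> simp

/-- Rank bound for exchangeable random variables: for exchangeable real-valued
`V 1, …, V N` (with `N = n+1 ≥ 1`) and `t ≥ 0`, the probability that at most `t`
of the values are `≤ V N` is bounded by `⌊t⌋ / N`. -/
theorem exchangeable_rank_bound {Ω : Type*} [MeasurableSpace Ω]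
    (P : Measure Ω) [IsProbabilityMeasure P]
    (n : ℕ) (V : Ω → Fin (n+1) → ℝ) (hV : Measurable V)
    (hexch : ∀ σ : Equiv.Perm (Fin (n+1)),
      Measure.map (fun ω => fun i => V ω (σ i)) P = Measure.map V P)
    (t : ℝ) (ht : 0 ≤ t) :
    (P {ω | ((Finset.univ.filter (fun i : Fin (n+1) =>
        V ω i ≤ V ω (Fin.last n))).card : ℝ) ≤ t}).toReal
      ≤ (⌊t⌋₊ : ℝ) / ((n : ℝ) + 1) := by
  set m := ⌊t⌋₊ with hm
  set B : Fin (n+1) → Set (Fin (n+1) → ℝ) := fun j =>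
    {v | (Finset.univ.filter (fun i : Fin (n+1) => v i ≤ v j)).card ≤ m} with hB
  have hBmeas : ∀ j, MeasurableSet (B j) := by
    intro j
    have : B j = (fun v : Fin (n+1) → ℝ =>
        (Finset.univ.filter (fun i : Fin (n+1) => v i ≤ v j)).card) ⁻¹' {k | k ≤ m} :=
      rfl
    rw [this]
    exact measurable_rankcard j (by trivial)
  have hAmeas : ∀ j, MeasurableSet (V ⁻¹' B j) := fun j => hV (hBmeas j)
  -- step 1: all indices have equal probability
  have key : ∀ j : Fin (n+1), P (V ⁻¹' B j) = P (V ⁻¹' B (Fin.last n)) := by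
    intro j
    set σ : Equiv.Perm (Fin (n+1)) := Equiv.swap (Fin.last n) j with hσ
    have hVσ : Measurable (fun ω => fun i => V ω (σ i)) :=
      measurable_pi_lambda _ fun i => (measurable_pi_apply (σ i)).comp hV
    have h1 : P (V ⁻¹' B (Fin.last n)) = Measure.map V P (B (Fin.last n)) :=
      (Measure.map_apply hV (hBmeas _)).symm
    have h2 : Measure.map (fun ω => fun i => V ω (σ i)) P (B (Fin.last n))
        = P ((fun ω => fun i => V ω (σ i)) ⁻¹' B (Fin.last n)) :=
      Measure.map_apply hVσ (hBmeas _)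
    have hpre : (fun ω => fun i => V ω (σ i)) ⁻¹' B (Fin.last n) = V ⁻¹' B j := by
      ext ω
      simp only [Set.mem_preimage, hB, Set.mem_setOf_eq]
      have hσlast : σ (Fin.last n) = j := Equiv.swap_apply_left _ _
      simp only [hσlast]
      rw [card_filter_comp_perm σ (fun i => V ω i ≤ V ω j)]
    rw [h1, ← hexch σ, h2, hpre]
  -- step 2: sum of probabilities bounded via pointwise count
  have hsum : ∑ j : Fin (n+1), P (V ⁻¹' B j) ≤ (m : ℝ≥0∞) := by
    have h1 : ∑ j : Fin (n+1), P (V ⁻¹' B j)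
        = ∫⁻ ω, ∑ j : Fin (n+1), (V ⁻¹' B j).indicator (fun _ => (1 : ℝ≥0∞)) ω ∂P := by
      rw [MeasureTheory.lintegral_finset_sum _
        (fun j _ => (measurable_const.indicator (hAmeas j)))]
      congr 1; ext j
      rw [MeasureTheory.lintegral_indicator_const (hAmeas j), one_mul]
    rw [h1]
    have h2 : ∀ ω, ∑ j : Fin (n+1), (V ⁻¹' B j).indicator (fun _ => (1 : ℝ≥0∞)) ω
        ≤ (m : ℝ≥0∞) := by
      intro ω
      have : ∑ j : Fin (n+1), (V ⁻¹' B j).indicator (fun _ => (1 : ℝ≥0∞)) ω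
          = ((Finset.univ.filter (fun j : Fin (n+1) => ω ∈ V ⁻¹' B j)).card : ℝ≥0∞) := by
        rw [Finset.card_filter, Nat.cast_sum]
        congr 1; ext j
        by_cases hj : ω ∈ V ⁻¹' B j <;> simp [hj, Set.indicator]
      rw [this]
      have := rank_card_bound (v := V ω) (m := m)
      have hc : (Finset.univ.filter (fun j : Fin (n+1) => ω ∈ V ⁻¹' B j)).card ≤ m := by
        refine le_trans (le_of_eq ?_) this
        congr 1
        apply Finset.filter_congr
        intro j _
        simp [hB]
      exact_mod_cast hc
    calc ∫⁻ ω, ∑ j : Fin (n+1), (V ⁻¹' B j).indicator (fun _ => (1 : ℝ≥0∞)) ω ∂P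
        ≤ ∫⁻ _, (m : ℝ≥0∞) ∂P := lintegral_mono h2
      _ = (m : ℝ≥0∞) := by simp
  have hsum2 : ((n : ℝ≥0∞) + 1) * P (V ⁻¹' B (Fin.last n)) ≤ (m : ℝ≥0∞) := by
    have : ∑ j : Fin (n+1), P (V ⁻¹' B j)
        = ((n : ℝ≥0∞) + 1) * P (V ⁻¹' B (Fin.last n)) := by
      rw [Finset.sum_congr rfl (fun j _ => key j)]
      simp [Finset.card_univ, mul_comm]
    rw [← this]; exact hsum
  -- identify the target set with V ⁻¹' B (Fin.last n)
  have hset : {ω | ((Finset.univ.filter (fun i : Fin (n+1) =>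
        V ω i ≤ V ω (Fin.last n))).card : ℝ) ≤ t} = V ⁻¹' B (Fin.last n) := by
    ext ω
    simp only [Set.mem_setOf_eq, Set.mem_preimage, hB, hm]
    exact (Nat.le_floor_iff ht).symm
  rw [hset]
  have hfin : P (V ⁻¹' B (Fin.last n)) ≠ ∞ := measure_ne_top _ _
  have hreal : ((n : ℝ) + 1) * (P (V ⁻¹' B (Fin.last n))).toReal ≤ (m : ℝ) := by
    have := ENNReal.toReal_mono (by simp) hsum2
    rw [ENNReal.toReal_mul] at this
    rw [ENNReal.toReal_add (ENNReal.natCast_ne_top n) ENNReal.one_ne_top] at this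
    simpa using this
  have hpos : (0 : ℝ) < (n : ℝ) + 1 := by positivity
  rw [le_div_iff₀ hpos]
  linarith [hreal]
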